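/- arXiv:1505.03582 — 2 statements merged into one kernel-verified Lean document; each statement's English description precedes it below -/
import Mathlib

section
/- The Klein bottle group ℤ ⋊₋₁ ℤ is an amalgamated free product ℤ *_ℤ ℤ, where each copy of ℤ contains the amalgamated ℤ as its index-2 subgroup. -/
/-- The action of ℤ on ℤ by negation (multiplicatively: inversion). -/
def negAction : Multiplicative ℤ →* MulAut (Multiplicative ℤ) :=
  zpowersHom _ (MulEquiv.inv (Multiplicative ℤ))

/-- The Klein bottle group ℤ ⋊₋₁ ℤ. -/
abbrev KleinGroup : Type := Multiplicative ℤ ⋊[negAction] Multiplicative ℤ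

/-- The inclusion of ℤ into a copy of ℤ as the index-2 subgroup (x ↦ x²). -/
def doubling : Multiplicative ℤ →* Multiplicative ℤ := powMonoidHom 2

open Monoid PushoutI SemidirectProduct Multiplicative

namespace KleinAux

abbrev P := Monoid.PushoutI (fun _ : Bool => doubling)

noncomputable def d : P := PushoutI.of (φ := fun _ : Bool => doubling) false (ofAdd 1)
noncomputable def u : P := PushoutI.of (φ := fun _ : Bool => doubling) true (ofAdd 1)

lemma dd_eq_uu : d * d = u * u := by
  have h1 : d * d = PushoutI.of (φ := fun _ : Bool => doubling) false (doubling (ofAdd 1)) := by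
    rw [show doubling (ofAdd 1) = ofAdd 1 * ofAdd 1 from rfl, map_mul]; rfl
  have h2 : u * u = PushoutI.of (φ := fun _ : Bool => doubling) true (doubling (ofAdd 1)) := by
    rw [show doubling (ofAdd 1) = ofAdd 1 * ofAdd 1 from rfl, map_mul]; rfl
  rw [h1, h2, of_apply_eq_base, of_apply_eq_base]

noncomputable def x : P := u * d⁻¹

lemma key1 : d * x * d⁻¹ = x⁻¹ := by
  have h : (d * d)⁻¹ = (u * u)⁻¹ := by rw [dd_eq_uu]
  show d * (u * d⁻¹) * d⁻¹ = (u * d⁻¹)⁻¹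
  calc d * (u * d⁻¹) * d⁻¹ = d * u * (d * d)⁻¹ := by group
    _ = d * u * (u * u)⁻¹ := by rw [h]
    _ = (u * d⁻¹)⁻¹ := by group

lemma e1 : d * x = x⁻¹ * d := by rw [← key1]; group

lemma key2 : Commute (d * d) x := by
  have h := dd_eq_uu
  show d * d * x = x * (d * d)
  show d * d * (u * d⁻¹) = (u * d⁻¹) * (d * d)
  calc d * d * (u * d⁻¹) = u * (u * u) * d⁻¹ := by rw [h]; group
    _ = u * (d * d) * d⁻¹ := by rw [← h]
    _ = (u * d⁻¹) * (d * d) := by group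

lemma conj_pow (k : ℤ) : d ^ k * x * (d ^ k)⁻¹ = if Even k then x else x⁻¹ := by
  rcases Int.even_or_odd k with ⟨m, rfl⟩ | ⟨m, rfl⟩
  · have hc : Commute (d ^ (m + m)) x := by
      have : d ^ (m + m) = (d * d) ^ m := by
        rw [(Commute.refl d).mul_zpow, zpow_add]
      rw [this]
      exact key2.zpow_left m
    rw [if_pos ⟨m, rfl⟩, hc.eq, mul_inv_cancel_right]
  · have hc : Commute (d ^ (m + m)) x⁻¹ := by
      have : d ^ (m + m) = (d * d) ^ m := by
        rw [(Commute.refl d).mul_zpow, zpow_add]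
      rw [this]
      exact (key2.zpow_left m).inv_right
    rw [if_neg (by simp [Int.even_add_one, parity_simps])]
    have hk : d ^ (2 * m + 1) = d ^ (m + m) * d := by
      rw [← zpow_add_one]; ring_nf
    rw [hk, mul_inv_rev, mul_assoc, mul_assoc, ← mul_assoc d x,
      ← mul_assoc (d * x), key1, ← mul_assoc, hc.eq]
    simp

lemma invol_zpow {G : Type*} [Group G] {s : G} (hs : s⁻¹ = s) (k : ℤ) :
    s ^ k = if Even k then 1 else s := by
  have h2 : s * s = 1 := by nth_rewrite 1 [← hs]; exact inv_mul_cancel s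
  rcases Int.even_or_odd k with ⟨m, rfl⟩ | ⟨m, rfl⟩
  · rw [if_pos ⟨m, rfl⟩, zpow_add, ← (Commute.refl s).mul_zpow, h2, one_zpow]
  · rw [if_neg (by simp [Int.even_add_one, parity_simps]), show (2 * m + 1) = (m + m) + 1 by ring,
      zpow_add, zpow_add, ← (Commute.refl s).mul_zpow, h2, one_zpow, one_mul, zpow_one]

lemma negAction_apply (g n : Multiplicative ℤ) :
    negAction g n = if Even g.toAdd then n else n⁻¹ := by
  have hs : (MulEquiv.inv (Multiplicative ℤ))⁻¹ = MulEquiv.inv (Multiplicative ℤ) := rfl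
  have : negAction g = (MulEquiv.inv (Multiplicative ℤ)) ^ g.toAdd := rfl
  rw [this, invol_zpow hs]
  split <;> rfl

noncomputable def ψ : KleinGroup →* P :=
  SemidirectProduct.lift (zpowersHom P x) (zpowersHom P d) (by
    intro g
    apply MonoidHom.ext_mint
    show zpowersHom P x (negAction g (ofAdd 1)) = MulAut.conj (zpowersHom P d g) (zpowersHom P x (ofAdd 1))
    rw [negAction_apply, MulAut.conj_apply, zpowersHom_apply, zpowersHom_apply, zpowersHom_apply]
    rw [show ((ofAdd 1 : Multiplicative ℤ)).toAdd = 1 from rfl, zpow_one]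
    rw [conj_pow]
    split
    · rw [show ((ofAdd 1 : Multiplicative ℤ)).toAdd = 1 from rfl, zpow_one]
    · rw [show ((ofAdd 1 : Multiplicative ℤ)⁻¹).toAdd = -1 from rfl, zpow_neg_one])

noncomputable def a : KleinGroup := SemidirectProduct.inl (ofAdd 1)
noncomputable def b : KleinGroup := SemidirectProduct.inr (ofAdd 1)

lemma ba : b * a = a⁻¹ * b := by
  have h := SemidirectProduct.inl_aut (φ := negAction) (ofAdd 1) (ofAdd 1)
  rw [negAction_apply] at h
  rw [if_neg (by decide)] at h
  rw [map_inv] at h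
  have : (a⁻¹ : KleinGroup) = b * a * b⁻¹ := h
  rw [this]; group

lemma abab : (a * b) * (a * b) = b * b := by
  have h := ba
  calc (a * b) * (a * b) = a * (b * a) * b := by group
    _ = a * (a⁻¹ * b) * b := by rw [h]
    _ = b * b := by group

noncomputable def fmap : ∀ _ : Bool, Multiplicative ℤ →* KleinGroup :=
  fun i => match i with
  | false => zpowersHom KleinGroup b
  | true => zpowersHom KleinGroup (a * b)

lemma hf : ∀ i, (fmap i).comp doubling = zpowersHom KleinGroup (b * b) := by
  intro i
  apply MonoidHom.ext_mint
  show fmap i (doubling (ofAdd 1)) = (b * b) ^ ((ofAdd (1:ℤ)).toAdd)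
  rw [show doubling (ofAdd 1) = ofAdd 1 * ofAdd 1 from rfl, map_mul,
    show ((ofAdd 1 : Multiplicative ℤ)).toAdd = 1 from rfl, zpow_one]
  cases i
  · show b ^ (1:ℤ) * b ^ (1:ℤ) = b * b
    rw [zpow_one]
  · show (a * b) ^ (1:ℤ) * (a * b) ^ (1:ℤ) = b * b
    rw [zpow_one]
    exact abab

noncomputable def φ : P →* KleinGroup :=
  PushoutI.lift fmap (zpowersHom KleinGroup (b * b)) hf

lemma φd : φ d = b := by
  have : φ d = fmap false (ofAdd 1) := PushoutI.lift_of _ _ _ _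
  rw [this]
  show b ^ (1:ℤ) = b
  exact zpow_one b

lemma φu : φ u = a * b := by
  have : φ u = fmap true (ofAdd 1) := PushoutI.lift_of _ _ _ _
  rw [this]
  show (a * b) ^ (1:ℤ) = a * b
  exact zpow_one _

lemma φx : φ x = a := by
  show φ (u * d⁻¹) = a
  rw [map_mul, map_inv, φu, φd, mul_inv_cancel_right]

lemma ψa : ψ a = x := by
  show ψ (SemidirectProduct.inl (ofAdd 1)) = x
  rw [show ψ (SemidirectProduct.inl (ofAdd 1)) = zpowersHom P x (ofAdd 1) from
    SemidirectProduct.lift_inl _ _ _ _, zpowersHom_apply]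
  exact zpow_one x

lemma ψb : ψ b = d := by
  show ψ (SemidirectProduct.inr (ofAdd 1)) = d
  rw [show ψ (SemidirectProduct.inr (ofAdd 1)) = zpowersHom P d (ofAdd 1) from
    SemidirectProduct.lift_inr _ _ _ _, zpowersHom_apply]
  exact zpow_one d

lemma comp1 : φ.comp ψ = MonoidHom.id KleinGroup := by
  apply SemidirectProduct.hom_ext
  · apply MonoidHom.ext_mint
    show φ (ψ a) = a
    rw [ψa, φx]
  · apply MonoidHom.ext_mint
    show φ (ψ b) = b
    rw [ψb, φd]

lemma comp2 : ψ.comp φ = MonoidHom.id P := by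
  apply PushoutI.hom_ext_nonempty
  intro i
  apply MonoidHom.ext_mint
  cases i
  · show ψ (φ d) = d
    rw [φd, ψb]
  · show ψ (φ u) = u
    rw [φu, map_mul, ψa, ψb]
    show u * d⁻¹ * d = u
    rw [inv_mul_cancel_right]

lemma mem_range_iff (c : Multiplicative ℤ) : c ∈ doubling.range ↔ Even c.toAdd := by
  constructor
  · rintro ⟨y, rfl⟩
    refine ⟨y.toAdd, ?_⟩
    show (Multiplicative.toAdd (y ^ 2)) = _
    rw [toAdd_pow]; ring
  · rintro ⟨m, hm⟩
    refine ⟨ofAdd m, ?_⟩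
    show (ofAdd m) ^ 2 = c
    rw [← ofAdd_toAdd c, hm, pow_two, ← ofAdd_add]

end KleinAux

/-- The Klein bottle group ℤ ⋊₋₁ ℤ is the amalgamated free product ℤ *_ℤ ℤ,
where each copy of ℤ contains the amalgamated ℤ as its index-2 subgroup. -/
theorem klein_iso_amalgamatedProduct :
    doubling.range.index = 2 ∧
    Nonempty (KleinGroup ≃* Monoid.PushoutI (fun _ : Bool => doubling)) := by
  constructor
  · rw [Subgroup.index_eq_two_iff]
    refine ⟨Multiplicative.ofAdd 1, fun c => ?_⟩
    have h1 : c * Multiplicative.ofAdd 1 ∈ doubling.range ↔ Even (c.toAdd + 1) := by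
      rw [KleinAux.mem_range_iff, toAdd_mul, toAdd_ofAdd]
    have h2 := KleinAux.mem_range_iff c
    rw [Xor]
    rcases Int.even_or_odd c.toAdd with he | ho
    · exact Or.inr ⟨h2.2 he, fun hc => (Int.even_add_one.1 (h1.1 hc)) he⟩
    · exact Or.inl ⟨h1.2 (Int.even_add_one.2 (Int.not_even_iff_odd.2 ho)),
        fun hc => (Int.not_even_iff_odd.2 ho) (h2.1 hc)⟩
  · exact ⟨MonoidHom.toMulEquiv KleinAux.ψ KleinAux.φ KleinAux.comp1 KleinAux.comp2⟩
end

section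
/- The wallpaper group [p2] = ℤ² ⋊ (ℤ/2ℤ), with ℤ/2ℤ acting by negation, is isomorphic to the amalgamated free product D_∞ *_ℤ D_∞ over the index-2 infinite cyclic subgroups. -/
/-- Relations for the infinite dihedral group D_∞ = ⟨u, v ∣ u² = v² = 1⟩. -/
def dihedralRels : Set (FreeGroup Bool) :=
  {FreeGroup.of true ^ 2, FreeGroup.of false ^ 2}

abbrev InfDihedral : Type := PresentedGroup dihedralRels

/-- The translation uv in D_∞, generating the infinite cyclic translation subgroup. -/
def dTrans : InfDihedral := PresentedGroup.of true * PresentedGroup.of false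

/-- ℤ², written multiplicatively. -/
abbrev Z2 : Type := Multiplicative ℤ × Multiplicative ℤ

/-- The inversion automorphism of ℤ² (negation, written multiplicatively). -/
def negAut2 : MulAut Z2 := MulEquiv.inv Z2

lemma negAut2_sq : negAut2 ^ 2 = 1 := by
  ext x
  · simp [negAut2, pow_two]
  · simp [negAut2, pow_two]

/-- The action of ℤ/2ℤ on ℤ² by negation. -/
def negActionZ2 : Multiplicative (ZMod 2) →* MulAut Z2 where
  toFun x := negAut2 ^ (Multiplicative.toAdd x).val
  map_one' := by simp
  map_mul' x y := by
    have key : ∀ n : ℕ, negAut2 ^ (n % 2) = negAut2 ^ n := by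
      intro n
      conv_rhs => rw [← Nat.div_add_mod n 2]
      rw [pow_add, pow_mul, negAut2_sq, one_pow, one_mul]
    show negAut2 ^ (Multiplicative.toAdd x + Multiplicative.toAdd y).val = _
    rw [ZMod.val_add, key, pow_add]

namespace P2Aux

lemma rel_one {r : FreeGroup Bool} (hr : r ∈ dihedralRels) :
    PresentedGroup.mk dihedralRels r = 1 := by
  have : r ∈ Subgroup.normalClosure dihedralRels := Subgroup.subset_normalClosure hr
  exact (QuotientGroup.eq_one_iff r).2 this

lemma u_sq : (PresentedGroup.of true : InfDihedral) ^ 2 = 1 := by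
  have := rel_one (r := FreeGroup.of true ^ 2) (by left; rfl)
  rw [map_pow] at this; exact this

lemma v_sq : (PresentedGroup.of false : InfDihedral) ^ 2 = 1 := by
  have := rel_one (r := FreeGroup.of false ^ 2) (by right; rfl)
  rw [map_pow] at this; exact this

lemma u_inv : (PresentedGroup.of true : InfDihedral)⁻¹ = PresentedGroup.of true := by
  rw [← mul_eq_one_iff_inv_eq, ← pow_two, u_sq]

lemma v_inv : (PresentedGroup.of false : InfDihedral)⁻¹ = PresentedGroup.of false := by
  rw [← mul_eq_one_iff_inv_eq, ← pow_two, v_sq]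

lemma u_conj : PresentedGroup.of true * dTrans * PresentedGroup.of true = dTrans⁻¹ := by
  rw [dTrans, mul_inv_rev, u_inv, v_inv,
    ← mul_assoc (PresentedGroup.of true) (PresentedGroup.of true), ← pow_two, u_sq, one_mul]

lemma u_conj_zpow (n : ℤ) :
    PresentedGroup.of true * dTrans ^ n * PresentedGroup.of true = dTrans ^ (-n) := by
  have h := map_zpow (MulAut.conj (PresentedGroup.of true : InfDihedral)) dTrans n
  simp only [MulAut.conj_apply, u_inv] at h
  rw [h, u_conj, inv_zpow, zpow_neg]

lemma u_mul_u : (PresentedGroup.of true : InfDihedral) * PresentedGroup.of true = 1 := by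
  rw [← pow_two, u_sq]

lemma u_u_cancel (x : InfDihedral) :
    PresentedGroup.of true * (PresentedGroup.of true * x) = x := by
  rw [← mul_assoc, u_mul_u, one_mul]

lemma t_u_rw (n : ℤ) :
    dTrans ^ n * PresentedGroup.of true = PresentedGroup.of true * dTrans ^ (-n) := by
  conv_rhs => rw [← u_conj_zpow n]
  rw [← mul_assoc, ← mul_assoc, u_mul_u, one_mul]

def sigma : InfDihedral →* Multiplicative (ZMod 2) :=
  PresentedGroup.toGroup (f := fun _ => Multiplicative.ofAdd (1 : ZMod 2)) (by
    intro r hr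
    rcases hr with h | h <;> subst h <;> simp only [map_pow, FreeGroup.lift_apply_of] <;> decide)

lemma sigma_u : sigma (PresentedGroup.of true) = Multiplicative.ofAdd (1 : ZMod 2) :=
  PresentedGroup.toGroup.of _

lemma sigma_v : sigma (PresentedGroup.of false) = Multiplicative.ofAdd (1 : ZMod 2) :=
  PresentedGroup.toGroup.of _

lemma sigma_t : sigma dTrans = 1 := by
  rw [dTrans, map_mul, sigma_u, sigma_v]; decide

lemma u_tpow_not_mem (n : ℤ) :
    PresentedGroup.of true * dTrans ^ n ∉ Subgroup.zpowers dTrans := by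
  rintro h
  obtain ⟨m, hm⟩ := Subgroup.mem_zpowers_iff.1 h
  have := congrArg sigma hm
  rw [map_zpow, sigma_t, map_mul, map_zpow, sigma_t, sigma_u] at this
  simp at this
  exact absurd this (by decide)

def Kgrp : Subgroup InfDihedral where
  carrier := {x | ∃ n : ℤ, x = dTrans ^ n ∨ x = PresentedGroup.of true * dTrans ^ n}
  one_mem' := ⟨0, Or.inl (by simp)⟩
  inv_mem' := by
    rintro x ⟨n, h | h⟩ <;> subst h
    · exact ⟨-n, Or.inl (by rw [← zpow_neg])⟩
    · refine ⟨n, Or.inr ?_⟩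
      rw [mul_inv_rev, u_inv, ← zpow_neg, t_u_rw, neg_neg]
  mul_mem' := by
    rintro x y ⟨a, hx | hx⟩ ⟨b, hy | hy⟩ <;> subst hx <;> subst hy
    · exact ⟨a + b, Or.inl (by rw [zpow_add])⟩
    · refine ⟨-a + b, Or.inr ?_⟩
      rw [← mul_assoc, t_u_rw, mul_assoc, ← zpow_add]
    · exact ⟨a + b, Or.inr (by rw [mul_assoc, ← zpow_add])⟩
    · refine ⟨-a + b, Or.inl ?_⟩
      rw [← mul_assoc, mul_assoc _ _ (PresentedGroup.of true), t_u_rw,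
        ← mul_assoc, mul_assoc _ (PresentedGroup.of true), u_u_cancel, ← zpow_add]

lemma mem_Kgrp (x : InfDihedral) :
    ∃ n : ℤ, x = dTrans ^ n ∨ x = PresentedGroup.of true * dTrans ^ n := by
  refine PresentedGroup.generated_by dihedralRels Kgrp (fun j => ?_) x
  cases j
  · exact ⟨1, Or.inr (by rw [zpow_one, dTrans, u_u_cancel])⟩
  · exact ⟨0, Or.inr (by simp)⟩

lemma index_two : (Subgroup.zpowers dTrans).index = 2 := by
  rw [Subgroup.index_eq_two_iff]
  refine ⟨PresentedGroup.of true, fun b => ?_⟩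
  obtain ⟨n, hb | hb⟩ := mem_Kgrp b <;> subst hb
  · refine Or.inr ⟨⟨n, rfl⟩, ?_⟩
    rw [t_u_rw]
    exact u_tpow_not_mem _
  · refine Or.inl ⟨?_, u_tpow_not_mem n⟩
    rw [mul_assoc, ← mul_assoc, u_conj_zpow]
    exact ⟨-n, rfl⟩

/-! ### The isomorphism -/

abbrev Gp : Type := Z2 ⋊[negActionZ2] Multiplicative (ZMod 2)
abbrev phiB : Bool → (Multiplicative ℤ →* InfDihedral) := fun _ => zpowersHom InfDihedral dTrans
abbrev Pp : Type := Monoid.PushoutI phiB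

def sG : Gp := SemidirectProduct.inr (Multiplicative.ofAdd (1 : ZMod 2))
def xG : Gp := SemidirectProduct.inl (Multiplicative.ofAdd (1 : ℤ), 1)
def yG : Gp := SemidirectProduct.inl (1, Multiplicative.ofAdd (1 : ℤ))

lemma negAct_apply (n : Z2) : negActionZ2 (Multiplicative.ofAdd (1 : ZMod 2)) n = n⁻¹ := by
  show (negAut2 ^ (Multiplicative.toAdd (Multiplicative.ofAdd (1 : ZMod 2))).val) n = n⁻¹
  rw [show (Multiplicative.toAdd (Multiplicative.ofAdd (1 : ZMod 2))).val = 1 from rfl, pow_one]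
  rfl

lemma sG_sq : sG ^ 2 = 1 := by
  rw [sG, pow_two, ← map_mul]
  norm_num
  decide

lemma sG_inv : sG⁻¹ = sG := by
  rw [← mul_eq_one_iff_inv_eq, ← pow_two, sG_sq]

lemma s_conj_inl (n : Z2) :
    sG * SemidirectProduct.inl n * sG = SemidirectProduct.inl n⁻¹ := by
  have h := SemidirectProduct.inl_aut (φ := negActionZ2) (Multiplicative.ofAdd (1 : ZMod 2)) n
  rw [negAct_apply] at h
  rw [show (Multiplicative.ofAdd (1 : ZMod 2))⁻¹ = Multiplicative.ofAdd (1 : ZMod 2) from by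
    decide] at h
  exact h.symm

lemma s_cancel (x : Gp) : sG * (sG * x) = x := by
  rw [← mul_assoc, ← pow_two, sG_sq, one_mul]

lemma sxsx : sG * (sG * xG) = xG := s_cancel xG

lemma s_inl_sq (n : Z2) : (sG * SemidirectProduct.inl n) ^ 2 = 1 := by
  have h : sG * SemidirectProduct.inl n * (sG * SemidirectProduct.inl n)
      = (sG * SemidirectProduct.inl n * sG) * SemidirectProduct.inl n := by group
  rw [pow_two, h, s_conj_inl, ← map_mul, inv_mul_cancel, map_one]


def UP (i : Bool) : Pp := Monoid.PushoutI.of (φ := phiB) i (PresentedGroup.of true)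
def VP (i : Bool) : Pp := Monoid.PushoutI.of (φ := phiB) i (PresentedGroup.of false)
def TP : Pp := Monoid.PushoutI.base phiB (Multiplicative.ofAdd (1 : ℤ))

lemma of_dTrans (i : Bool) : Monoid.PushoutI.of (φ := phiB) i dTrans = TP := by
  have h := Monoid.PushoutI.of_apply_eq_base (φ := phiB) i (Multiplicative.ofAdd (1 : ℤ))
  rw [show phiB i (Multiplicative.ofAdd (1 : ℤ)) = dTrans from by
    rw [zpowersHom_apply]; simp] at h
  exact h

lemma TP_eq (i : Bool) : TP = UP i * VP i := by
  rw [← of_dTrans i, dTrans, map_mul]; rfl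

lemma UP_sq (i : Bool) : UP i ^ 2 = 1 := by
  rw [UP, ← map_pow, u_sq, map_one]

lemma UP_inv (i : Bool) : (UP i)⁻¹ = UP i := by
  rw [← mul_eq_one_iff_inv_eq, ← pow_two, UP_sq]

lemma UP_cancel (i : Bool) (x : Pp) : UP i * (UP i * x) = x := by
  rw [← mul_assoc, ← pow_two, UP_sq, one_mul]

lemma UP_conj_T (i : Bool) : UP i * TP * UP i = TP⁻¹ := by
  have h := congrArg (Monoid.PushoutI.of (φ := phiB) i) u_conj
  rw [map_mul, map_mul, map_inv, of_dTrans] at h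
  exact h

lemma T_UP (i : Bool) : TP * UP i = UP i * TP⁻¹ := by
  conv_rhs => rw [← UP_conj_T i]
  rw [← mul_assoc, ← mul_assoc, ← pow_two, UP_sq, one_mul]

lemma UP_T (i : Bool) : UP i * TP = TP⁻¹ * UP i := by
  have h := UP_conj_T i
  calc UP i * TP = UP i * TP * (UP i * UP i) := by rw [← pow_two, UP_sq, mul_one]
  _ = (UP i * TP * UP i) * UP i := by group
  _ = TP⁻¹ * UP i := by rw [h]

def yP : Pp := UP false * UP true

lemma comm_T_y : Commute TP yP := by
  show TP * yP = yP * TP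
  calc TP * (UP false * UP true) = (TP * UP false) * UP true := by group
  _ = (UP false * TP⁻¹) * UP true := by rw [T_UP]
  _ = UP false * (TP⁻¹ * UP true) := by group
  _ = UP false * (UP true * TP) := by rw [← UP_T]
  _ = (UP false * UP true) * TP := by group

def fOne : Z2 →* Pp :=
  (zpowersHom Pp TP).noncommCoprod (zpowersHom Pp yP) (by
    intro m n
    rw [zpowersHom_apply, zpowersHom_apply]
    exact comm_T_y.zpow_zpow _ _)

lemma fOne_x : fOne (Multiplicative.ofAdd (1 : ℤ), 1) = TP := by
  rw [fOne, MonoidHom.noncommCoprod_apply]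
  simp [zpowersHom_apply]

lemma fOne_y : fOne (1, Multiplicative.ofAdd (1 : ℤ)) = yP := by
  rw [fOne, MonoidHom.noncommCoprod_apply]
  simp [zpowersHom_apply]

def zmod2Hom {H : Type*} [Monoid H] (g : H) (hg : g ^ 2 = 1) :
    Multiplicative (ZMod 2) →* H where
  toFun x := g ^ (Multiplicative.toAdd x).val
  map_one' := by simp
  map_mul' x y := by
    have key : ∀ n : ℕ, g ^ (n % 2) = g ^ n := by
      intro n
      conv_rhs => rw [← Nat.div_add_mod n 2]
      rw [pow_add, pow_mul, hg, one_pow, one_mul]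
    show g ^ (Multiplicative.toAdd x + Multiplicative.toAdd y).val = _
    rw [ZMod.val_add, key, pow_add]

lemma zmod2Hom_gen {H : Type*} [Monoid H] (g : H) (hg : g ^ 2 = 1) :
    zmod2Hom g hg (Multiplicative.ofAdd (1 : ZMod 2)) = g := by
  show g ^ (Multiplicative.toAdd (Multiplicative.ofAdd (1 : ZMod 2))).val = g
  rw [show (Multiplicative.toAdd (Multiplicative.ofAdd (1 : ZMod 2))).val = 1 from rfl, pow_one]

def fTwo : Multiplicative (ZMod 2) →* Pp := zmod2Hom (UP false) (UP_sq false)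

lemma Z2_hom_ext {H : Type*} [Monoid H] {f g : Z2 →* H}
    (h1 : f (Multiplicative.ofAdd 1, 1) = g (Multiplicative.ofAdd 1, 1))
    (h2 : f (1, Multiplicative.ofAdd 1) = g (1, Multiplicative.ofAdd 1)) : f = g := by
  have e1 : f.comp (MonoidHom.inl (Multiplicative ℤ) (Multiplicative ℤ))
      = g.comp (MonoidHom.inl (Multiplicative ℤ) (Multiplicative ℤ)) :=
    MonoidHom.ext_mint (by simpa using h1)
  have e2 : f.comp (MonoidHom.inr (Multiplicative ℤ) (Multiplicative ℤ))
      = g.comp (MonoidHom.inr (Multiplicative ℤ) (Multiplicative ℤ)) :=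
    MonoidHom.ext_mint (by simpa using h2)
  ext p
  have hp : p = ((p.1, 1) : Z2) * (1, p.2) := by
    ext <;> simp
  rw [hp, map_mul, map_mul]
  rw [show f (p.1, 1) = g (p.1, 1) from DFunLike.congr_fun e1 p.1,
    show f ((1 : Multiplicative ℤ), p.2) = g (1, p.2) from DFunLike.congr_fun e2 p.2]

lemma zmod2_hom_ext {H : Type*} [Monoid H] {f g : Multiplicative (ZMod 2) →* H}
    (h : f (Multiplicative.ofAdd 1) = g (Multiplicative.ofAdd 1)) : f = g := by
  refine MonoidHom.ext fun x => ?_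
  have hx : ∀ y : Multiplicative (ZMod 2), y = 1 ∨ y = Multiplicative.ofAdd (1 : ZMod 2) := by
    decide
  rcases hx x with h' | h' <;> subst h'
  · simp
  · exact h


lemma fTwo_gen : fTwo (Multiplicative.ofAdd (1 : ZMod 2)) = UP false := zmod2Hom_gen _ _

lemma U_yP_U : UP false * yP * (UP false)⁻¹ = yP⁻¹ := by
  rw [UP_inv, yP, mul_inv_rev, UP_inv, UP_inv, UP_cancel]

lemma hF : ∀ g, fOne.comp ((negActionZ2 g).toMonoidHom)
    = (MulAut.conj (fTwo g)).toMonoidHom.comp fOne := by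
  intro g
  have hx : ∀ y : Multiplicative (ZMod 2), y = 1 ∨ y = Multiplicative.ofAdd (1 : ZMod 2) := by
    decide
  rcases hx g with h | h <;> subst h
  · refine MonoidHom.ext fun p => ?_
    simp
  · apply Z2_hom_ext
    · show fOne ((negActionZ2 (Multiplicative.ofAdd (1 : ZMod 2))) (Multiplicative.ofAdd 1, 1))
        = MulAut.conj (fTwo (Multiplicative.ofAdd (1 : ZMod 2))) (fOne (Multiplicative.ofAdd 1, 1))
      rw [negAct_apply, map_inv, fOne_x, fTwo_gen, MulAut.conj_apply, UP_inv, UP_conj_T]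
    · show fOne ((negActionZ2 (Multiplicative.ofAdd (1 : ZMod 2))) (1, Multiplicative.ofAdd 1))
        = MulAut.conj (fTwo (Multiplicative.ofAdd (1 : ZMod 2))) (fOne (1, Multiplicative.ofAdd 1))
      rw [negAct_apply, map_inv, fOne_y, fTwo_gen, MulAut.conj_apply, U_yP_U]

def F : Gp →* Pp := SemidirectProduct.lift fOne fTwo hF

lemma F_x : F xG = TP := by
  have h : F (SemidirectProduct.inl (Multiplicative.ofAdd (1 : ℤ), 1))
      = fOne (Multiplicative.ofAdd (1 : ℤ), 1) := SemidirectProduct.lift_inl _ _ _ _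
  rw [show xG = SemidirectProduct.inl (Multiplicative.ofAdd (1 : ℤ), (1 : Multiplicative ℤ))
    from rfl, h, fOne_x]

lemma F_y : F yG = yP := by
  have h : F (SemidirectProduct.inl ((1 : Multiplicative ℤ), Multiplicative.ofAdd (1 : ℤ)))
      = fOne (1, Multiplicative.ofAdd (1 : ℤ)) := SemidirectProduct.lift_inl _ _ _ _
  rw [show yG = SemidirectProduct.inl ((1 : Multiplicative ℤ), Multiplicative.ofAdd (1 : ℤ))
    from rfl, h, fOne_y]

lemma F_s : F sG = UP false := by
  have h : F (SemidirectProduct.inr (Multiplicative.ofAdd (1 : ZMod 2)))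
      = fTwo (Multiplicative.ofAdd (1 : ZMod 2)) := SemidirectProduct.lift_inr _ _ _ _
  rw [show sG = SemidirectProduct.inr (Multiplicative.ofAdd (1 : ZMod 2)) from rfl, h, fTwo_gen]

lemma s_yG : sG * yG * sG = yG⁻¹ := by
  show sG * SemidirectProduct.inl ((1 : Multiplicative ℤ), Multiplicative.ofAdd (1 : ℤ)) * sG
    = (SemidirectProduct.inl ((1 : Multiplicative ℤ), Multiplicative.ofAdd (1 : ℤ)))⁻¹
  rw [s_conj_inl, ← map_inv]

def phiF : InfDihedral →* Gp :=
  PresentedGroup.toGroup (f := fun b => cond b sG (sG * xG)) (by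
    intro r hr
    rcases hr with h | h <;> subst h <;> simp only [map_pow, FreeGroup.lift_apply_of]
    · exact sG_sq
    · exact s_inl_sq (Multiplicative.ofAdd (1 : ℤ), 1))

def phiT : InfDihedral →* Gp :=
  PresentedGroup.toGroup (f := fun b => cond b (sG * yG) (sG * yG * xG)) (by
    intro r hr
    rcases hr with h | h <;> subst h <;> simp only [map_pow, FreeGroup.lift_apply_of]
    · exact s_inl_sq ((1 : Multiplicative ℤ), Multiplicative.ofAdd (1 : ℤ))
    · have he : sG * yG * xG = sG * SemidirectProduct.inl
          (((1 : Multiplicative ℤ), Multiplicative.ofAdd (1 : ℤ))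
            * (Multiplicative.ofAdd (1 : ℤ), (1 : Multiplicative ℤ))) := by
        rw [map_mul, ← mul_assoc]; rfl
      rw [he]
      exact s_inl_sq _)

lemma phiF_u : phiF (PresentedGroup.of true) = sG := PresentedGroup.toGroup.of _
lemma phiF_v : phiF (PresentedGroup.of false) = sG * xG := PresentedGroup.toGroup.of _
lemma phiT_u : phiT (PresentedGroup.of true) = sG * yG := PresentedGroup.toGroup.of _
lemma phiT_v : phiT (PresentedGroup.of false) = sG * yG * xG := PresentedGroup.toGroup.of _

lemma phiF_t : phiF dTrans = xG := by
  rw [dTrans, map_mul, phiF_u, phiF_v]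
  exact s_cancel xG

lemma phiT_t : phiT dTrans = xG := by
  rw [dTrans, map_mul, phiT_u, phiT_v]
  have h1 : sG * yG * (sG * yG * xG) = (sG * yG * sG) * (yG * xG) := by group
  rw [h1, s_yG, inv_mul_cancel_left]

def phis : Bool → (InfDihedral →* Gp) := fun b => cond b phiT phiF

lemma hk : ∀ i, (phis i).comp (phiB i) = zpowersHom Gp xG := by
  intro i
  apply MonoidHom.ext_mint
  show phis i ((zpowersHom InfDihedral dTrans) (Multiplicative.ofAdd 1))
    = xG ^ Multiplicative.toAdd (Multiplicative.ofAdd (1 : ℤ))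
  rw [zpowersHom_apply]
  cases i
  · simpa [phis] using phiF_t
  · simpa [phis] using phiT_t

def B : Pp →* Gp := Monoid.PushoutI.lift phis (zpowersHom Gp xG) hk

lemma B_TP : B TP = xG := by
  have h := Monoid.PushoutI.lift_base phis (zpowersHom Gp xG) hk (Multiplicative.ofAdd (1 : ℤ))
  rw [show B TP = zpowersHom Gp xG (Multiplicative.ofAdd (1 : ℤ)) from h, zpowersHom_apply]
  simp

lemma B_Uf : B (UP false) = sG := by
  have h := Monoid.PushoutI.lift_of phis (zpowersHom Gp xG) hk
    (i := false) (PresentedGroup.of true)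
  rw [show B (UP false) = phis false (PresentedGroup.of true) from h]
  exact phiF_u

lemma B_Ut : B (UP true) = sG * yG := by
  have h := Monoid.PushoutI.lift_of phis (zpowersHom Gp xG) hk
    (i := true) (PresentedGroup.of true)
  rw [show B (UP true) = phis true (PresentedGroup.of true) from h]
  exact phiT_u

lemma B_yP : B yP = yG := by
  rw [yP, map_mul, B_Uf, B_Ut]
  exact s_cancel yG

lemma hBF : B.comp F = MonoidHom.id Gp := by
  apply SemidirectProduct.hom_ext
  · apply Z2_hom_ext
    · show B (F xG) = xG
      rw [F_x, B_TP]
    · show B (F yG) = yG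
      rw [F_y, B_yP]
  · apply zmod2_hom_ext
    show B (F sG) = sG
    rw [F_s, B_Uf]

lemma hFB : F.comp B = MonoidHom.id Pp := by
  apply Monoid.PushoutI.hom_ext_nonempty
  intro i
  apply PresentedGroup.ext
  intro x
  cases i <;> cases x
  · show F (B (VP false)) = VP false
    have h := Monoid.PushoutI.lift_of phis (zpowersHom Gp xG) hk
      (i := false) (PresentedGroup.of false)
    rw [show B (VP false) = phis false (PresentedGroup.of false) from h,
      show phis false (PresentedGroup.of false) = sG * xG from phiF_v,
      map_mul, F_s, F_x, TP_eq false, UP_cancel]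
  · show F (B (UP false)) = UP false
    rw [B_Uf, F_s]
  · show F (B (VP true)) = VP true
    have h := Monoid.PushoutI.lift_of phis (zpowersHom Gp xG) hk
      (i := true) (PresentedGroup.of false)
    rw [show B (VP true) = phis true (PresentedGroup.of false) from h,
      show phis true (PresentedGroup.of false) = sG * yG * xG from phiT_v,
      map_mul, map_mul, F_s, F_y, F_x, yP, UP_cancel, TP_eq true, UP_cancel]
  · show F (B (UP true)) = UP true
    rw [B_Ut, map_mul, F_s, F_y, yP, UP_cancel]

def iso : Gp ≃* Pp := MonoidHom.toMulEquiv F B hBF hFB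

end P2Aux



/-- The wallpaper group [p2] = ℤ² ⋊₋₁ (ℤ/2ℤ) is the amalgamated free product
D_∞ *_ℤ D_∞ over the index-2 infinite cyclic translation subgroups. -/
theorem p2_iso_amalgamatedProduct :
    (Subgroup.zpowers dTrans).index = 2 ∧
    Nonempty ((Z2 ⋊[negActionZ2] Multiplicative (ZMod 2)) ≃*
      Monoid.PushoutI (fun _ : Bool => zpowersHom InfDihedral dTrans)) := by
  exact ⟨P2Aux.index_two, ⟨P2Aux.iso⟩⟩
end
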